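/- Let T = ℝ^n/ℤ^n act on ℂ^n in the standard way with moment map φ(z) = −(1/2)(|z₁|²,...,|z_n|²), and let A : ℝ^n → 𝔥 be the linear map sending eᵢ to vᵢ for labels vᵢ in the lattice of a torus H. Given an open face F of the polyhedron P associated to the labels, a point z ∈ ℂⁿ appearing in the zero level set over F has T^n-stabilizer exactly the subtorus T^n_F generated by the span of {eᵢ : (vᵢ,rᵢ) ∈ S_F}; hence the stabilizer of the corresponding point of the Delzant space quotient is K_F = ker(Ā_F : T^n_F → H_F), which has dimension equal to the excess e_S(F) = #S_F − codim F. -/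
import Mathlib


open scoped Classical

/-- In the Delzant construction, let `T^n` act on `ℂ^n` in the standard
way and let `A : ℝ^n → 𝔥` send `eᵢ` to the labelling vector `vᵢ`.  Let `(η, z)` be a point
of the zero level set of the moment map `ψ̃_r` lying over the open face `F = Face I` of the
labelled polyhedron (so `⟨η, vᵢ⟩ − rᵢ = ½|zᵢ|²`, with equality to `0` exactly on `I`).
Then the `T^n`-stabilizer of `z` is exactly the subtorus `T^n_F` generated by the span of
`{eᵢ : i ∈ I}` (described on the covering `ℝ^n` of `T^n`: `t` fixes `z` iff `t i ∈ ℤ` for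
all `i ∉ I`); and the Lie algebra of the stabilizer `K_F = ker(Ā_F)` of the corresponding
point of the quotient, namely `{t : supp t ⊆ I, ∑ᵢ tᵢ vᵢ = 0}`, has dimension equal to the
excess `e_S(F) = #S_F − codim F`. -/
theorem delzant_stabilizer_and_excess
    (k n : ℕ) (v : Fin n → Fin k → ℤ) (r : Fin n → ℝ)
    (I : Finset (Fin n)) (η : Fin k → ℝ) (z : Fin n → ℂ)
    -- (η, z) lies in the zero level set of the moment map ψ̃_r
    (hlevel : ∀ i, (∑ j, η j * (v i j : ℝ)) - r i = (1 / 2) * Complex.normSq (z i))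
    -- η lies in the open face F = Face I: the labels tight at η are exactly those in I
    (htightI : ∀ i ∈ I, ∑ j, η j * (v i j : ℝ) = r i)
    (hstrict : ∀ i ∉ I, r i < ∑ j, η j * (v i j : ℝ)) :
    -- (a) the stabilizer of z in T^n is exactly the subtorus T^n_F
    (∀ t : Fin n → ℝ,
      (∀ i, Complex.exp (2 * (Real.pi : ℂ) * Complex.I * (t i : ℂ)) * z i = z i)
        ↔ ∀ i ∉ I, ∃ m : ℤ, t i = (m : ℝ))
    -- (b) dim K_F = excess of F:  #S_F − codim F, with codim F = rank of {vᵢ : i ∈ I}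
    ∧ ((Module.finrank ℝ
        ↥((⨅ i ∈ (Iᶜ : Finset (Fin n)),
              LinearMap.ker (LinearMap.proj i : (Fin n → ℝ) →ₗ[ℝ] ℝ)) ⊓
           LinearMap.ker
             (LinearMap.pi (fun j : Fin k =>
               ∑ i : Fin n, ((v i j : ℝ)) • (LinearMap.proj i : (Fin n → ℝ) →ₗ[ℝ] ℝ)))) : ℤ)
      = (I.card : ℤ) -
        (Module.finrank ℝ
          ↥(Submodule.span ℝ ((fun i => fun j => (v i j : ℝ)) '' (I : Set (Fin n)))) : ℤ)) := by
  have hz0 : ∀ i ∈ I, z i = 0 := by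
    intro i hi
    have h1 := hlevel i
    rw [htightI i hi, sub_self] at h1
    have : Complex.normSq (z i) = 0 := by linarith
    exact Complex.normSq_eq_zero.mp this
  have hzne : ∀ i ∉ I, z i ≠ 0 := by
    intro i hi h0
    have h1 := hlevel i
    rw [h0] at h1
    simp at h1
    exact absurd (hstrict i hi) (by linarith)
  constructor
  · intro t
    constructor
    · intro h i hi
      have hexp : Complex.exp (2 * (Real.pi : ℂ) * Complex.I * (t i : ℂ)) = 1 :=
        mul_right_cancel₀ (hzne i hi) (by rw [h i, one_mul])
      obtain ⟨m, hm⟩ := Complex.exp_eq_one_iff.mp hexp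
      refine ⟨m, ?_⟩
      have h2 : (2 * (Real.pi : ℂ) * Complex.I) ≠ 0 := by
        simp [Real.pi_ne_zero, Complex.I_ne_zero]
      have h3 : (t i : ℂ) * (2 * (Real.pi : ℂ) * Complex.I)
          = (m : ℂ) * (2 * (Real.pi : ℂ) * Complex.I) := by
        rw [← hm]; ring
      have h4 := mul_right_cancel₀ h2 h3
      exact_mod_cast h4
    · intro h i
      by_cases hi : i ∈ I
      · rw [hz0 i hi, mul_zero]
      · obtain ⟨m, hm⟩ := h i hi
        have : Complex.exp (2 * (Real.pi : ℂ) * Complex.I * (t i : ℂ)) = 1 := by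
          rw [Complex.exp_eq_one_iff]
          exact ⟨m, by rw [hm]; push_cast; ring⟩
        rw [this, one_mul]
  · set L : (Fin n → ℝ) →ₗ[ℝ] (Fin k → ℝ) :=
      LinearMap.pi (fun j : Fin k =>
        ∑ i : Fin n, ((v i j : ℝ)) • (LinearMap.proj i : (Fin n → ℝ) →ₗ[ℝ] ℝ)) with hLdef
    set W : Submodule ℝ (Fin n → ℝ) :=
      ⨅ i ∈ (Iᶜ : Finset (Fin n)),
        LinearMap.ker (LinearMap.proj i : (Fin n → ℝ) →ₗ[ℝ] ℝ) with hWdef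
    have hmemW : ∀ t : Fin n → ℝ, t ∈ W ↔ ∀ i ∉ I, t i = 0 := by
      intro t
      simp [hWdef, Submodule.mem_iInf, Finset.mem_compl]
    -- the family of standard basis vectors indexed by I
    set fam : I → (Fin n → ℝ) := fun i => Pi.single (i : Fin n) 1 with hfam
    have li : LinearIndependent ℝ fam := by
      have hb := (Pi.basisFun ℝ (Fin n)).linearIndependent
      have h2 := hb.comp (Subtype.val : I → Fin n) Subtype.val_injective
      have heq : (⇑(Pi.basisFun ℝ (Fin n)) ∘ (Subtype.val : I → Fin n)) = fam := by
        funext i; simp [hfam, Pi.basisFun_apply]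
      rwa [heq] at h2
    have hspan : W = Submodule.span ℝ (Set.range fam) := by
      apply le_antisymm
      · intro t ht
        have hW' := (hmemW t).mp ht
        have hrep : t = ∑ i ∈ I, t i • (Pi.single i 1 : Fin n → ℝ) := by
          funext j
          rw [Finset.sum_apply]
          by_cases hj : j ∈ I
          · rw [Finset.sum_eq_single j]
            · simp
            · intro b _ hb; simp [Pi.single_apply, hb]
            · intro h; exact absurd hj h
          · rw [hW' j hj]
            symm
            apply Finset.sum_eq_zero
            intro i hi
            have hne : i ≠ j := fun h => hj (h ▸ hi)
            simp [Pi.single_apply, hne]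
        rw [hrep]
        exact Submodule.sum_mem _ fun i hi =>
          Submodule.smul_mem _ _ (Submodule.subset_span ⟨⟨i, hi⟩, rfl⟩)
      · rw [Submodule.span_le]
        rintro _ ⟨⟨i, hi⟩, rfl⟩
        rw [SetLike.mem_coe, hmemW]
        intro i' hi'
        have : i ≠ i' := fun h => hi' (h ▸ hi)
        simp [hfam, Pi.single_apply, this.symm]
    have hfinW : Module.finrank ℝ W = I.card := by
      rw [hspan, finrank_span_eq_card li, Fintype.card_coe]
    -- L maps fam i to the vector (v i ·)
    have hLfam : ∀ i : I, L (fam i) = fun j => (v (i : Fin n) j : ℝ) := by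
      intro i
      funext j
      simp only [hLdef, hfam, LinearMap.pi_apply, LinearMap.sum_apply,
        LinearMap.smul_apply, LinearMap.proj_apply, smul_eq_mul]
      rw [Finset.sum_eq_single (i : Fin n)]
      · simp
      · intro b _ hb; simp [Pi.single_apply, hb]
      · simp
    have hmap : Submodule.map L W
        = Submodule.span ℝ ((fun i => fun j => (v i j : ℝ)) '' (I : Set (Fin n))) := by
      rw [hspan, Submodule.map_span]
      congr 1
      rw [← Set.range_comp]
      ext x
      constructor
      · rintro ⟨i, rfl⟩
        exact ⟨i, i.2, (hLfam i).symm⟩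
      · rintro ⟨i, hi, rfl⟩
        exact ⟨⟨i, hi⟩, hLfam ⟨i, hi⟩⟩
    -- rank-nullity for L restricted to W
    set f : W →ₗ[ℝ] (Fin k → ℝ) := L.comp W.subtype with hfdef
    have hrn := LinearMap.finrank_range_add_finrank_ker f
    have hrange : LinearMap.range f = Submodule.map L W := by
      rw [hfdef, LinearMap.range_comp, Submodule.range_subtype]
    have hker : Module.finrank ℝ (LinearMap.ker f) = Module.finrank ℝ ↥(W ⊓ LinearMap.ker L) := by
      have h1 : LinearMap.ker f = Submodule.comap W.subtype (W ⊓ LinearMap.ker L) := by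
        rw [hfdef, LinearMap.ker_comp, Submodule.comap_inf, Submodule.comap_subtype_self,
          top_inf_eq]
      rw [h1]
      exact (Submodule.comapSubtypeEquivOfLe inf_le_left).finrank_eq
    rw [hrange, hmap, hker, hfinW] at hrn
    omega
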